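/- arXiv:1904.07211 — 4 statements merged into one kernel-verified Lean document; each statement's English description precedes it below -/
import Mathlib

section
/- Let C ∈ ℂ^{n×n} be sectorial with W(C) contained in the open right half-plane (Re z > 0 for all z ∈ W(C)), and partition C = [[C₁₁, C₁₂],[C₂₁, C₂₂]] with C₁₁ ∈ ℂ^{k×k}. Then C₁₁ is invertible and the Schur complement C₂₂ − C₂₁C₁₁⁻¹C₁₂ is also sectorial with numerical range in the open right half-plane. -/
open Matrix

/-- The Schur complement of the top-left block of a sectorial matrix with numerical range
in the open right half-plane is again sectorial with numerical range in the open right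
half-plane. -/
theorem schur_complement_sectorial {k m : ℕ}
    (A : Matrix (Fin k) (Fin k) ℂ) (B : Matrix (Fin k) (Fin m) ℂ)
    (B' : Matrix (Fin m) (Fin k) ℂ) (E : Matrix (Fin m) (Fin m) ℂ)
    (hsec : ∀ x : Fin k ⊕ Fin m → ℂ, x ≠ 0 →
      0 < (star x ⬝ᵥ (Matrix.fromBlocks A B B' E) *ᵥ x).re) :
    IsUnit A ∧ ∀ y : Fin m → ℂ, y ≠ 0 →
      0 < (star y ⬝ᵥ (E - B' * A⁻¹ * B) *ᵥ y).re := by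
  have hA : IsUnit A := by
    rw [← Matrix.mulVec_injective_iff_isUnit]
    intro x x' hx
    by_contra hne
    have hz : A *ᵥ (x - x') = 0 := by
      rw [Matrix.mulVec_sub, hx, sub_self]
    set z := x - x' with hzdef
    have hzne : z ≠ 0 := sub_ne_zero.mpr hne
    have hvne : (Sum.elim z 0 : Fin k ⊕ Fin m → ℂ) ≠ 0 := by
      intro h
      apply hzne
      funext i
      have := congrFun h (Sum.inl i)
      simpa using this
    have := hsec (Sum.elim z 0) hvne
    rw [show (star (Sum.elim z 0) : Fin k ⊕ Fin m → ℂ) = Sum.elim (star z) 0 by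
          funext i; cases i <;> simp [Pi.star_apply],
        Matrix.fromBlocks_mulVec] at this
    simp [hz, sumElim_dotProduct_sumElim] at this
  refine ⟨hA, fun y hy => ?_⟩
  set x1 : Fin k → ℂ := -(A⁻¹ * B) *ᵥ y with hx1
  have hvne : (Sum.elim x1 y : Fin k ⊕ Fin m → ℂ) ≠ 0 := by
    intro h
    apply hy
    funext i
    have := congrFun h (Sum.inr i)
    simpa using this
  have h := hsec (Sum.elim x1 y) hvne
  have hmul : A * -(A⁻¹ * B) = -B := by
    rw [Matrix.mul_neg, ← Matrix.mul_assoc,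
      Matrix.mul_nonsing_inv A ((Matrix.isUnit_iff_isUnit_det A).mp hA), Matrix.one_mul]
  have htop : A *ᵥ x1 + B *ᵥ y = 0 := by
    rw [hx1, Matrix.mulVec_mulVec, hmul, Matrix.neg_mulVec]
    simp
  have hbot : B' *ᵥ x1 + E *ᵥ y = (E - B' * A⁻¹ * B) *ᵥ y := by
    rw [hx1, Matrix.mulVec_mulVec, ← Matrix.add_mulVec]
    rw [Matrix.mul_neg, ← Matrix.mul_assoc, neg_add_eq_sub]
  rw [show (star (Sum.elim x1 y) : Fin k ⊕ Fin m → ℂ) = Sum.elim (star x1) (star y) by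
        funext i; cases i <;> simp [Pi.star_apply],
      Matrix.fromBlocks_mulVec] at h
  simp only [Sum.elim_comp_inl, Sum.elim_comp_inr] at h
  rw [htop, hbot, sumElim_dotProduct_sumElim] at h
  simpa using h
end

section
/- Let A, B ∈ ℂ^{n×n} with Re(x*Ax) > 0 and Re(x*Bx) > 0 for all nonzero x ∈ ℂⁿ. Then every eigenvalue λ of AB satisfies λ ∈ W'(A)·W'(B), where W'(M) = {x*Mx : x ≠ 0} is the angular numerical range; in particular, λ is a product of an element of W'(A) and an element of W'(B). -/
open Matrix

/-- Every eigenvalue of the product of two strictly accretive matrices is a product of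
an element of the angular numerical range of `A` and one of `B`. -/
theorem eigenvalue_mem_angular_range_product {n : ℕ}
    (A B : Matrix (Fin n) (Fin n) ℂ)
    (hA : ∀ x : Fin n → ℂ, x ≠ 0 → 0 < (star x ⬝ᵥ A *ᵥ x).re)
    (hB : ∀ x : Fin n → ℂ, x ≠ 0 → 0 < (star x ⬝ᵥ B *ᵥ x).re) :
    ∀ μ : ℂ, (∃ v : Fin n → ℂ, v ≠ 0 ∧ (A * B) *ᵥ v = μ • v) →
      ∃ x : Fin n → ℂ, x ≠ 0 ∧ ∃ y : Fin n → ℂ, y ≠ 0 ∧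
        μ = (star x ⬝ᵥ A *ᵥ x) * (star y ⬝ᵥ B *ᵥ y) := by
  rintro μ ⟨v, hv, hμ⟩
  set c : ℂ := star v ⬝ᵥ B *ᵥ v with hc
  have hcre : 0 < c.re := hB v hv
  have hc0 : c ≠ 0 := fun h => by simp [h] at hcre
  -- x = B v
  have hBv : B *ᵥ v ≠ 0 := by
    intro h
    rw [hc, h] at hcre
    simp at hcre
  refine ⟨B *ᵥ v, hBv, (‖c‖ : ℂ)⁻¹ • v, ?_, ?_⟩
  · exact smul_ne_zero
      (inv_ne_zero (Complex.ofReal_ne_zero.mpr (norm_ne_zero_iff.mpr hc0))) hv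
  · have hx : star (B *ᵥ v) ⬝ᵥ A *ᵥ (B *ᵥ v) = μ * (starRingEnd ℂ) c := by
      rw [mulVec_mulVec, hμ]
      have h1 : star (B *ᵥ v) ⬝ᵥ (μ • v) = μ * (star (B *ᵥ v) ⬝ᵥ v) := by
        rw [dotProduct_smul]; simp [smul_eq_mul]
      rw [h1]
      congr 1
      -- star (B v) ⬝ᵥ v = conj (star v ⬝ᵥ B v)
      rw [hc]
      simp only [dotProduct, map_sum, _root_.map_mul, Pi.star_apply, RCLike.star_def]
      rw [Finset.sum_congr rfl]
      intro i _
      simp [mul_comm]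
    have hy : star ((‖c‖ : ℂ)⁻¹ • v) ⬝ᵥ B *ᵥ ((‖c‖ : ℂ)⁻¹ • v)
        = (‖c‖ : ℂ)⁻¹ * (‖c‖ : ℂ)⁻¹ * c := by
      rw [mulVec_smul, dotProduct_smul, star_smul, smul_dotProduct]
      simp [smul_eq_mul, hc]
      ring
    rw [hx, hy]
    have hnorm : (starRingEnd ℂ) c * c = (‖c‖ : ℂ) * ‖c‖ := by
      rw [mul_comm, Complex.mul_conj]
      simp [Complex.normSq_eq_norm_sq, sq]
    have hn0 : (‖c‖ : ℂ) ≠ 0 := Complex.ofReal_ne_zero.mpr (norm_ne_zero_iff.mpr hc0)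
    rw [show μ * (starRingEnd ℂ) c * ((↑‖c‖ : ℂ)⁻¹ * (↑‖c‖ : ℂ)⁻¹ * c)
        = μ * (((starRingEnd ℂ) c * c) * ((↑‖c‖ : ℂ)⁻¹ * (↑‖c‖ : ℂ)⁻¹)) from by ring, hnorm]
    have h2 : (↑‖c‖ : ℂ) * ↑‖c‖ * ((↑‖c‖ : ℂ)⁻¹ * (↑‖c‖ : ℂ)⁻¹) = 1 := by
      rw [mul_mul_mul_comm, mul_inv_cancel₀ hn0, one_mul]
    rw [h2, mul_one]
end

section
/- Let A, B ∈ ℂ^{n×n} both be strictly accretive (Hermitian parts positive definite). Then −1 is not an eigenvalue of AB, i.e., I + AB is invertible. -/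
open Matrix

/-- If `A` and `B` are strictly accretive then `I + AB` is invertible. -/
theorem one_add_mul_isUnit_of_strictlyAccretive {n : ℕ}
    (A B : Matrix (Fin n) (Fin n) ℂ)
    (hA : ∀ x : Fin n → ℂ, x ≠ 0 → 0 < (star x ⬝ᵥ A *ᵥ x).re)
    (hB : ∀ x : Fin n → ℂ, x ≠ 0 → 0 < (star x ⬝ᵥ B *ᵥ x).re) :
    IsUnit (1 + A * B) := by
  rw [Matrix.isUnit_iff_isUnit_det, isUnit_iff_ne_zero]
  intro hdet
  obtain ⟨x, hx, hx0⟩ := (Matrix.exists_mulVec_eq_zero_iff).2 hdet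
  rw [Matrix.add_mulVec, Matrix.one_mulVec, ← Matrix.mulVec_mulVec] at hx0
  set y := B *ᵥ x with hy
  have hAy : A *ᵥ y = -x := by
    have := hx0
    linear_combination (norm := module) this
  have hyne : y ≠ 0 := by
    intro h
    apply hx
    have : A *ᵥ y = 0 := by rw [h, Matrix.mulVec_zero]
    rw [hAy] at this
    simpa using this
  have h1 := hB x hx
  have h2 := hA y hyne
  rw [hAy] at h2
  have hconj : star y ⬝ᵥ x = star (star x ⬝ᵥ y) := Matrix.star_dotProduct _ _
  rw [show star y ⬝ᵥ (-x) = -(star y ⬝ᵥ x) by simp, hconj] at h2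
  simp only [Complex.neg_re, Complex.star_def, Complex.conj_re] at h2
  linarith
end

section
/- Let A, B ∈ ℂ^{n×n} be such that W'(A) and W'(B) are each contained in a sector {z ≠ 0 : arg z ∈ [αᵢ, βᵢ]} with (β₁ + β₂) − (α₁ + α₂) < π. Then the Hadamard product A ⊙ B satisfies: for every nonzero x ∈ ℂⁿ, x*(A ⊙ B)x ≠ 0 and arg(x*(A ⊙ B)x) ∈ [α₁ + α₂, β₁ + β₂]. In particular A ⊙ B is sectorial. -/
open Matrix Complex Polynomial

section SectorLemmas

def InSect (a b : ℝ) (z : ℂ) : Prop :=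
  ∃ r θ : ℝ, 0 < r ∧ θ ∈ Set.Icc a b ∧ z = (r : ℂ) * Complex.exp (θ * Complex.I)

lemma InSect.ne_zero {a b : ℝ} {z : ℂ} (h : InSect a b z) : z ≠ 0 := by
  obtain ⟨r, θ, hr, -, rfl⟩ := h
  exact mul_ne_zero (by exact_mod_cast hr.ne') (Complex.exp_ne_zero _)

lemma InSect.le {a b : ℝ} {z : ℂ} (h : InSect a b z) : a ≤ b := by
  obtain ⟨r, θ, -, hθ, -⟩ := h
  exact le_trans hθ.1 hθ.2

lemma inSect_of_arg {a b : ℝ} {z : ℂ} (h0 : z ≠ 0) (h : z.arg ∈ Set.Icc a b) :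
    InSect a b z := by
  refine ⟨‖z‖, z.arg, norm_pos_iff.mpr h0, h, ?_⟩
  rw [Complex.norm_mul_exp_arg_mul_I]

lemma InSect.mul {a b c d : ℝ} {z w : ℂ} (hz : InSect a b z) (hw : InSect c d w) :
    InSect (a + c) (b + d) (z * w) := by
  obtain ⟨r, θ, hr, hθ, rfl⟩ := hz
  obtain ⟨s, ψ, hs, hψ, rfl⟩ := hw
  refine ⟨r * s, θ + ψ, by positivity, ⟨add_le_add hθ.1 hψ.1, add_le_add hθ.2 hψ.2⟩, ?_⟩
  push_cast
  rw [add_mul, Complex.exp_add]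
  ring

lemma InSect.conj {a b : ℝ} {z : ℂ} (hz : InSect a b z) :
    InSect (-b) (-a) ((starRingEnd ℂ) z) := by
  obtain ⟨r, θ, hr, hθ, rfl⟩ := hz
  refine ⟨r, -θ, hr, ⟨neg_le_neg hθ.2, neg_le_neg hθ.1⟩, ?_⟩
  rw [RingHom.map_mul, ← Complex.exp_conj]
  push_cast
  simp [Complex.conj_ofReal]

lemma InSect.inv {a b : ℝ} {z : ℂ} (hz : InSect a b z) :
    InSect (-b) (-a) z⁻¹ := by
  obtain ⟨r, θ, hr, hθ, rfl⟩ := hz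
  refine ⟨r⁻¹, -θ, by positivity, ⟨neg_le_neg hθ.2, neg_le_neg hθ.1⟩, ?_⟩
  rw [mul_inv, ← Complex.exp_neg]
  push_cast
  ring_nf

lemma insect_def (a b : ℝ) (z : ℂ) : InSect a b z ↔
    ∃ r θ : ℝ, 0 < r ∧ θ ∈ Set.Icc a b ∧ z = (r : ℂ) * Complex.exp (θ * Complex.I) := Iff.rfl

lemma InSect.re_ge {a b : ℝ} {z : ℂ} (hδπ : (b - a) / 2 ≤ Real.pi) (h : InSect a b z) :
    ‖z‖ * Real.cos ((b - a) / 2) ≤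
      (Complex.exp (-(((a + b) / 2 : ℝ) : ℂ) * Complex.I) * z).re := by
  obtain ⟨r, θ, hr, hθ, rfl⟩ := (insect_def a b z).1 h
  have key : Complex.exp (-(((a + b) / 2 : ℝ) : ℂ) * Complex.I) *
        ((r : ℂ) * Complex.exp ((θ : ℂ) * Complex.I))
      = (r : ℂ) * Complex.exp (((θ - (a + b) / 2 : ℝ) : ℂ) * Complex.I) := by
    push_cast
    rw [show ((θ : ℂ) - ((a : ℂ) + b) / 2) * Complex.I
        = (θ : ℂ) * Complex.I + -(((a : ℂ) + b) / 2) * Complex.I by ring, Complex.exp_add]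
    ring
  rw [key, Complex.re_ofReal_mul, Complex.exp_ofReal_mul_I_re]
  have habs : ‖(r : ℂ) * Complex.exp ((θ : ℂ) * Complex.I)‖ = r := by
    rw [norm_mul, Complex.norm_exp_ofReal_mul_I, Complex.norm_real, Real.norm_eq_abs,
      abs_of_pos hr, mul_one]
  rw [habs]
  have hcos : Real.cos ((b - a) / 2) ≤ Real.cos (θ - (a + b) / 2) := by
    rw [← Real.cos_abs (θ - (a + b) / 2)]
    apply Real.cos_le_cos_of_nonneg_of_le_pi (abs_nonneg _) hδπ
    rw [abs_le]
    exact ⟨by linarith [hθ.1], by linarith [hθ.2]⟩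
  exact mul_le_mul_of_nonneg_left hcos hr.le

lemma inSect_of_re_ge {a b : ℝ} {z : ℂ} (hab : a ≤ b) (hw : b - a < Real.pi) (hz : z ≠ 0)
    (h : ‖z‖ * Real.cos ((b - a) / 2) ≤
      (Complex.exp (-(((a + b) / 2 : ℝ) : ℂ) * Complex.I) * z).re) : InSect a b z := by
  have hposz : (0 : ℝ) < ‖z‖ := norm_pos_iff.mpr hz
  set w : ℂ := Complex.exp (-(((a + b) / 2 : ℝ) : ℂ) * Complex.I) * z with hwdef
  have hw0 : w ≠ 0 := mul_ne_zero (Complex.exp_ne_zero _) hz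
  have habsw : ‖w‖ = ‖z‖ := by
    rw [hwdef, norm_mul]
    have : (-(((a + b) / 2 : ℝ) : ℂ) * Complex.I) = ((-((a + b) / 2) : ℝ) : ℂ) * Complex.I := by
      push_cast; ring
    rw [this, Complex.norm_exp_ofReal_mul_I, one_mul]
  have hcos : Real.cos ((b - a) / 2) ≤ Real.cos w.arg := by
    rw [Complex.cos_arg hw0, habsw, le_div_iff₀ hposz]
    linarith
  have hargle : |w.arg| ≤ (b - a) / 2 := by
    by_contra hc
    push_neg at hc
    have h1 : Real.cos |w.arg| < Real.cos ((b - a) / 2) :=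
      Real.cos_lt_cos_of_nonneg_of_le_pi (by linarith) (Complex.abs_arg_le_pi w) hc
    rw [Real.cos_abs] at h1
    linarith
  rw [abs_le] at hargle
  rw [insect_def]
  refine ⟨‖z‖, (a + b) / 2 + w.arg, hposz,
    Set.mem_Icc.2 ⟨by linarith [hargle.1], by linarith [hargle.2]⟩, ?_⟩
  have h2 : w = (‖z‖ : ℂ) * Complex.exp ((w.arg : ℂ) * Complex.I) := by
    conv_lhs => rw [← Complex.norm_mul_exp_arg_mul_I w]
    rw [habsw]
  have h3 : z = Complex.exp ((((a + b) / 2 : ℝ) : ℂ) * Complex.I) * w := by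
    rw [hwdef, ← mul_assoc, ← Complex.exp_add]
    push_cast
    rw [show ((a : ℂ) + b) / 2 * Complex.I + -(((a : ℂ) + b) / 2) * Complex.I = 0 by ring,
      Complex.exp_zero, one_mul]
  conv_lhs => rw [h3, h2]
  rw [← mul_assoc, mul_comm (Complex.exp _) ((‖z‖ : ℂ)), mul_assoc, ← Complex.exp_add]
  push_cast
  ring_nf

lemma inSect_multiset_sum {a b : ℝ} (hab : a ≤ b) (hw : b - a < Real.pi)
    (s : Multiset ℂ) (hs : s ≠ 0) (h : ∀ z ∈ s, InSect a b z) : InSect a b s.sum := by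
  have hpi := Real.pi_pos
  have hcpos : 0 < Real.cos ((b - a) / 2) := by
    apply Real.cos_pos_of_mem_Ioo
    exact Set.mem_Ioo.2 ⟨by linarith, by linarith⟩
  set c : ℂ := Complex.exp (-(((a + b) / 2 : ℝ) : ℂ) * Complex.I) with hc
  -- re of c * sum = sum of re's
  have hre : (c * s.sum).re = ((s.map (fun z => (c * z).re)).sum) := by
    have h1 := Multiset.sum_map_mul_left (s := s) (a := c) (f := id)
    simp only [Multiset.map_id, id_eq, Multiset.map_id'] at h1
    rw [← h1]
    exact (map_multiset_sum Complex.reAddGroupHom _).trans (by rw [Multiset.map_map]; rfl)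
  have hstep : ((s.map (fun z => ‖z‖ * Real.cos ((b - a) / 2))).sum)
      ≤ ((s.map (fun z => (c * z).re)).sum) := by
    apply Multiset.sum_map_le_sum_map
    intro z hz
    exact InSect.re_ge (by linarith) (h z hz)
  have habs : ‖s.sum‖ ≤ (s.map (fun z => ‖z‖)).sum := by
    simpa using norm_multiset_sum_le s
  have hsumabs : (s.map (fun z => ‖z‖ * Real.cos ((b - a) / 2))).sum
      = (s.map (fun z => ‖z‖)).sum * Real.cos ((b - a) / 2) := by
    rw [Multiset.sum_map_mul_right]
  obtain ⟨z₀, hz₀⟩ := Multiset.exists_mem_of_ne_zero hs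
  have hz₀pos : 0 < ‖z₀‖ := norm_pos_iff.mpr (h z₀ hz₀).ne_zero
  have hle : ‖z₀‖ ≤ (s.map (fun z => ‖z‖)).sum := by
    apply Multiset.single_le_sum
    · intro x hx
      obtain ⟨y, _, rfl⟩ := Multiset.mem_map.1 hx
      exact (norm_nonneg y)
    · exact Multiset.mem_map_of_mem _ hz₀
  have hrepos : 0 < (c * s.sum).re := by
    rw [hre]
    calc (0:ℝ) < ‖z₀‖ * Real.cos ((b - a) / 2) := by positivity
    _ ≤ (s.map (fun z => ‖z‖)).sum * Real.cos ((b - a) / 2) := by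
        apply mul_le_mul_of_nonneg_right hle hcpos.le
    _ = _ := hsumabs.symm
    _ ≤ _ := hstep
  have hsne : s.sum ≠ 0 := by
    intro h0
    rw [h0, mul_zero] at hrepos
    simp at hrepos
  apply inSect_of_re_ge hab hw hsne
  rw [← hc, hre]
  calc ‖s.sum‖ * Real.cos ((b - a) / 2)
      ≤ (s.map (fun z => ‖z‖)).sum * Real.cos ((b - a) / 2) :=
        mul_le_mul_of_nonneg_right habs hcpos.le
    _ = _ := hsumabs.symm
    _ ≤ _ := hstep

lemma conj_quadform {m : Type*} [Fintype m] (M : Matrix m m ℂ) (u : m → ℂ) :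
    star (M *ᵥ u) ⬝ᵥ u = (starRingEnd ℂ) (star u ⬝ᵥ M *ᵥ u) := by
  simp only [dotProduct, Pi.star_apply, map_sum, _root_.map_mul, Complex.conj_conj, RingHom.coe_coe]
  simp [mul_comm]

lemma exists_eigenvec {m : Type*} [Fintype m] [DecidableEq m] (M : Matrix m m ℂ) {μ : ℂ}
    (hμ : μ ∈ M.charpoly.roots) : ∃ v, v ≠ 0 ∧ M *ᵥ v = μ • v := by
  have hroot : M.charpoly.IsRoot μ := isRoot_of_mem_roots hμ
  have hdet : (Matrix.scalar m μ - M).det = 0 := by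
    have h2 := hroot
    rw [Matrix.charpoly, Polynomial.IsRoot, eval_det, Matrix.matPolyEquiv_charmatrix,
      Polynomial.eval_sub, Polynomial.eval_X, Polynomial.eval_C] at h2
    exact h2
  obtain ⟨v, hv, hv0⟩ := Matrix.exists_mulVec_eq_zero_iff.2 hdet
  refine ⟨v, hv, ?_⟩
  rw [Matrix.sub_mulVec, sub_eq_zero] at hv0
  rw [← hv0, Matrix.scalar_apply]
  rw [show (Matrix.diagonal (fun _ : m => μ)) = μ • (1 : Matrix m m ℂ) by
    simp [Matrix.smul_eq_diagonal_mul]]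
  rw [Matrix.smul_mulVec, Matrix.one_mulVec]

lemma key_trace {m : Type*} [Fintype m] [DecidableEq m] [Nonempty m]
    (C E : Matrix m m ℂ) (a₁ b₁ a₂ b₂ : ℝ)
    (hw : (b₁ + b₂) - (a₁ + a₂) < Real.pi)
    (hC : ∀ y : m → ℂ, y ≠ 0 → InSect a₁ b₁ (star y ⬝ᵥ C *ᵥ y))
    (hE : ∀ y : m → ℂ, y ≠ 0 → InSect a₂ b₂ (star y ⬝ᵥ E *ᵥ y)) :
    InSect (a₁ + a₂) (b₁ + b₂) (C * E).trace := by
  obtain ⟨i⟩ := (inferInstance : Nonempty m)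
  have hy0 : (Pi.single i 1 : m → ℂ) ≠ 0 := by
    intro h
    have := congrFun h i
    simp at this
  have hab1 : a₁ ≤ b₁ := (hC _ hy0).le
  have hab2 : a₂ ≤ b₂ := (hE _ hy0).le
  have hdetC : C.det ≠ 0 := by
    intro h0
    obtain ⟨v, hv, hv0⟩ := Matrix.exists_mulVec_eq_zero_iff.2 h0
    exact (hC v hv).ne_zero (by rw [hv0, dotProduct_zero])
  rw [Matrix.trace_eq_sum_roots_charpoly]
  have hcard : Multiset.card (C * E).charpoly.roots = Fintype.card m := by
    rw [Polynomial.splits_iff_card_roots.1 (IsAlgClosed.splits _),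
      Matrix.charpoly_natDegree_eq_dim]
  apply inSect_multiset_sum (by linarith) hw
  · intro h0
    rw [h0] at hcard
    simp only [Multiset.card_zero] at hcard
    exact Fintype.card_pos.ne' hcard.symm
  · intro μ hμ
    obtain ⟨v, hv, hv0⟩ := exists_eigenvec _ hμ
    set u := C⁻¹ *ᵥ v with hu
    have hCu : C *ᵥ u = v := by
      rw [hu, Matrix.mulVec_mulVec, Matrix.mul_nonsing_inv _ (isUnit_iff_ne_zero.2 hdetC), Matrix.one_mulVec]
    have hu0 : u ≠ 0 := fun h => hv (by rw [← hCu, h, Matrix.mulVec_zero])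
    have hEv : E *ᵥ v = μ • u := by
      have h1 : C *ᵥ (E *ᵥ v) = C *ᵥ (μ • u) := by
        rw [Matrix.mulVec_mulVec, hv0, Matrix.mulVec_smul, hCu]
      have h2 := congrArg (fun w => C⁻¹ *ᵥ w) h1
      simpa only [Matrix.mulVec_mulVec, Matrix.nonsing_inv_mul C (isUnit_iff_ne_zero.2 hdetC),
        Matrix.one_mulVec, one_mul, Matrix.mulVec_smul, ← Matrix.mul_assoc] using h2
    have s1 := hC u hu0
    have s2 := hE v hv
    have hq : star v ⬝ᵥ E *ᵥ v = μ * ((starRingEnd ℂ) (star u ⬝ᵥ C *ᵥ u)) := by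
      rw [hEv, ← conj_quadform, ← hCu]
      simp [dotProduct_smul, smul_eq_mul]
    have hμeq : μ = (star v ⬝ᵥ E *ᵥ v) * ((starRingEnd ℂ) (star u ⬝ᵥ C *ᵥ u))⁻¹ := by
      rw [hq, mul_assoc, mul_inv_cancel₀, mul_one]
      simpa using s1.ne_zero
    rw [hμeq, add_comm a₁ a₂, add_comm b₁ b₂]
    exact s2.mul (by simpa using s1.conj.inv)

end SectorLemmas

lemma sum_ext_zero {α : Type*} [Fintype α] (p : α → Prop) [DecidablePred p] (f : α → ℂ)
    (hf : ∀ k, ¬ p k → f k = 0) : ∑ k : {i // p i}, f k.1 = ∑ k, f k := by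
  rw [← Finset.sum_subtype (Finset.univ.filter p) (fun x => by simp) f]
  exact Finset.sum_filter_of_ne (fun k _ hk => by_contra fun hp => hk (hf k hp))

/-- Sector preservation for the Hadamard product: if the angular numerical ranges of `A`
and `B` lie in sectors `[α₁, β₁]` and `[α₂, β₂]` with total opening less than `π`, then
the angular numerical range of `A ⊙ B` lies in the sector `[α₁ + α₂, β₁ + β₂]`;
in particular `A ⊙ B` is sectorial. -/
theorem hadamard_sector {n : ℕ} (A B : Matrix (Fin n) (Fin n) ℂ) (α₁ β₁ α₂ β₂ : ℝ)
    (hαβ : (β₁ + β₂) - (α₁ + α₂) < Real.pi)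
    (hA : ∀ x : Fin n → ℂ, x ≠ 0 →
      star x ⬝ᵥ A *ᵥ x ≠ 0 ∧ (star x ⬝ᵥ A *ᵥ x).arg ∈ Set.Icc α₁ β₁)
    (hB : ∀ x : Fin n → ℂ, x ≠ 0 →
      star x ⬝ᵥ B *ᵥ x ≠ 0 ∧ (star x ⬝ᵥ B *ᵥ x).arg ∈ Set.Icc α₂ β₂) :
    ∀ x : Fin n → ℂ, x ≠ 0 →
      star x ⬝ᵥ (A ⊙ B) *ᵥ x ≠ 0 ∧
      ∃ r θ : ℝ, 0 < r ∧ θ ∈ Set.Icc (α₁ + α₂) (β₁ + β₂) ∧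
        star x ⬝ᵥ (A ⊙ B) *ᵥ x = (r : ℂ) * Complex.exp (θ * Complex.I) := by
  intro x hx
  classical
  set p : Fin n → Prop := fun i => x i ≠ 0 with hp
  haveI : Nonempty {i // p i} := by
    obtain ⟨i, hi⟩ := Function.ne_iff.1 hx
    exact ⟨⟨i, hi⟩⟩
  set C : Matrix {i // p i} {i // p i} ℂ :=
    Matrix.of (fun i j => star (x i.1) * A i.1 j.1 * x j.1) with hCdef
  set E : Matrix {i // p i} {i // p i} ℂ := Matrix.of (fun i j => B j.1 i.1) with hEdef
  -- quadratic form of C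
  have hC : ∀ y : {i // p i} → ℂ, y ≠ 0 → InSect α₁ β₁ (star y ⬝ᵥ C *ᵥ y) := by
    intro y hy
    set Y : Fin n → ℂ := fun k => if h : p k then x k * y ⟨k, h⟩ else 0 with hYdef
    have hYsub : ∀ k : {i // p i}, Y k.1 = x k.1 * y k := fun k => dif_pos k.2
    have hYzero : ∀ k, ¬ p k → Y k = 0 := fun k hk => dif_neg hk
    have hY0 : Y ≠ 0 := by
      obtain ⟨i, hi⟩ := Function.ne_iff.1 hy
      intro h
      apply hi
      have := congrFun h i.1
      rw [hYsub i] at this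
      simp only [Pi.zero_apply] at this ⊢
      rcases mul_eq_zero.1 this with h' | h'
      · exact absurd h' i.2
      · exact h'
    have hQ : star y ⬝ᵥ C *ᵥ y = star Y ⬝ᵥ A *ᵥ Y := by
      have e1 : star Y ⬝ᵥ A *ᵥ Y = ∑ k, star (Y k) * ∑ l, A k l * Y l := by
        simp only [dotProduct, mulVec, Pi.star_apply]
      have e2 : star y ⬝ᵥ C *ᵥ y
          = ∑ k : {i // p i}, star (y k) * ∑ l : {i // p i}, (star (x k.1) * A k.1 l.1 * x l.1) * y l := by
        simp only [dotProduct, mulVec, Pi.star_apply, hCdef, Matrix.of_apply]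
      rw [e1, e2, ← sum_ext_zero p (fun k => star (Y k) * ∑ l, A k l * Y l)
        (fun k hk => by simp [hYzero k hk])]
      apply Finset.sum_congr rfl
      intro k _
      rw [← sum_ext_zero p (fun l => A k.1 l * Y l)
        (fun l hl => by simp [hYzero l hl])]
      rw [hYsub k, star_mul']
      rw [Finset.mul_sum, Finset.mul_sum]
      apply Finset.sum_congr rfl
      intro l _
      rw [hYsub l]
      ring
    rw [hQ]
    have h := hA Y hY0
    exact inSect_of_arg h.1 h.2
  -- quadratic form of E
  have hE : ∀ y : {i // p i} → ℂ, y ≠ 0 → InSect α₂ β₂ (star y ⬝ᵥ E *ᵥ y) := by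
    intro y hy
    set Z : Fin n → ℂ := fun k => if h : p k then star (y ⟨k, h⟩) else 0 with hZdef
    have hZsub : ∀ k : {i // p i}, Z k.1 = star (y k) := fun k => dif_pos k.2
    have hZzero : ∀ k, ¬ p k → Z k = 0 := fun k hk => dif_neg hk
    have hZ0 : Z ≠ 0 := by
      obtain ⟨i, hi⟩ := Function.ne_iff.1 hy
      intro h
      apply hi
      have := congrFun h i.1
      rw [hZsub i] at this
      simpa using this
    have hQ : star y ⬝ᵥ E *ᵥ y = star Z ⬝ᵥ B *ᵥ Z := by
      have e1 : star Z ⬝ᵥ B *ᵥ Z = ∑ k, ∑ l, star (Z k) * (B k l * Z l) := by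
        simp only [dotProduct, mulVec, Pi.star_apply, Finset.mul_sum]
      have e2 : star y ⬝ᵥ E *ᵥ y
          = ∑ k : {i // p i}, ∑ l : {i // p i}, star (y k) * (B l.1 k.1 * y l) := by
        simp only [dotProduct, mulVec, Pi.star_apply, hEdef, Matrix.of_apply, Finset.mul_sum]
      rw [e1, e2]
      rw [← sum_ext_zero p (fun k => ∑ l, star (Z k) * (B k l * Z l))
        (fun k hk => by simp [hZzero k hk])]
      rw [Finset.sum_comm]
      apply Finset.sum_congr rfl
      intro k _
      rw [← sum_ext_zero p (fun l => star (Z k.1) * (B k.1 l * Z l))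
        (fun l hl => by simp [hZzero l hl])]
      apply Finset.sum_congr rfl
      intro l _
      rw [hZsub l, hZsub k]
      simp only [star_star]
      ring
    rw [hQ]
    have h := hB Z hZ0
    exact inSect_of_arg h.1 h.2
  -- trace identity
  have htr : star x ⬝ᵥ (A ⊙ B) *ᵥ x = (C * E).trace := by
    have e1 : (C * E).trace
        = ∑ k : {i // p i}, ∑ l : {i // p i}, star (x k.1) * (A k.1 l.1 * B k.1 l.1 * x l.1) := by
      simp only [Matrix.trace, Matrix.diag, Matrix.mul_apply, hCdef, hEdef, Matrix.of_apply]
      apply Finset.sum_congr rfl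
      intro k _
      apply Finset.sum_congr rfl
      intro l _
      ring
    have e2 : star x ⬝ᵥ (A ⊙ B) *ᵥ x = ∑ k, ∑ l, star (x k) * (A k l * B k l * x l) := by
      simp only [dotProduct, mulVec, Pi.star_apply, Matrix.hadamard_apply, Finset.mul_sum]
    rw [e1, e2]
    rw [← sum_ext_zero p (fun k => ∑ l, star (x k) * (A k l * B k l * x l))
      (fun k hk => by simp [show x k = 0 from not_not.1 hk])]
    apply Finset.sum_congr rfl
    intro k _
    rw [← sum_ext_zero p (fun l => star (x k.1) * (A k.1 l * B k.1 l * x l))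
      (fun l hl => by simp [show x l = 0 from not_not.1 hl])]
  have hfinal := key_trace C E α₁ β₁ α₂ β₂ hαβ hC hE
  rw [← htr] at hfinal
  exact ⟨hfinal.ne_zero, (insect_def _ _ _).1 hfinal⟩
end
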